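/- Let δ ≥ 6 be an integer, let 𝐮 be a standard sequence over {a, b} whose slope has a continued fraction expansion of the form θ = [0, 1, ⌊δ/2⌋, a₃, a₄, …], and let 𝐱_{2δ} = colour(𝐮, (12⋯δ)^ω, (1′2′⋯δ′)^ω). Then the distance between any two consecutive occurrences of any letter in 𝐱_{2δ} is at least 2δ−2. -/

import Mathlib

open Filter
open scoped ENNReal

namespace BalancedCE

variable {α : Type*} {β : Type*}

/-- The factor of `v` of length `n` starting at position `i`. -/
def factorAt (v : ℕ → α) (i n : ℕ) : List α := (List.range n).map fun k => v (i + k)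

/-- `u` is a factor of the sequence `v`. -/
def IsFactor (v : ℕ → α) (u : List α) : Prop := ∃ i, factorAt v i u.length = u

/-- The word `w` occurs in the sequence `v` at position `i`. -/
def OccursAt (v : ℕ → α) (w : List α) (i : ℕ) : Prop := factorAt v i w.length = w

/-- A sequence is balanced if counts of each letter in equal-length factors differ by at most 1. -/
def Balanced [DecidableEq α] (v : ℕ → α) : Prop :=
  ∀ (a : α) (u w : List α), IsFactor v u → IsFactor v w → u.length = w.length →
    |(u.count a : ℤ) - (w.count a : ℤ)| ≤ 1

def EventuallyPeriodic (v : ℕ → α) : Prop :=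
  ∃ p, 0 < p ∧ ∃ N, ∀ n, N ≤ n → v (n + p) = v n

def Recurrent (v : ℕ → α) : Prop :=
  ∀ u : List α, IsFactor v u → ∀ N : ℕ, ∃ i, N ≤ i ∧ OccursAt v u i

/-- `i < j` are consecutive occurrences of the letter `a` in `v`. -/
def ConsecOcc (v : ℕ → α) (a : α) (i j : ℕ) : Prop :=
  i < j ∧ v i = a ∧ v j = a ∧ ∀ k, i < k → k < j → v k ≠ a

/-- `p` is a period of the finite word `z` (i.e. `z` is a prefix of `u^ω` with `|u| = p`). -/
def IsPeriod (z : List α) (p : ℕ) : Prop :=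
  0 < p ∧ ∀ i, i + p < z.length → z[i]? = z[i + p]?

/-- The minimal period of a finite word. -/
noncomputable def minPeriod (z : List α) : ℕ := sInf {p | IsPeriod z p}

/-- The exponent of a finite word: its length divided by its minimal period. -/
noncomputable def expE (z : List α) : ℝ≥0∞ := (z.length : ℝ≥0∞) / (minPeriod z : ℝ≥0∞)

/-- The critical exponent of a sequence: the supremum of exponents of nonempty factors. -/
noncomputable def criticalExponent (v : ℕ → α) : ℝ≥0∞ :=
  ⨆ (z : List α) (_ : IsFactor v z ∧ z ≠ []), expE z

/-- A Pansiot sequence over a `d`-letter alphabet. -/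
def Pansiot (d : ℕ) (v : ℕ → α) : Prop :=
  (∀ i : ℕ, (factorAt v i (d - 1)).Nodup) ∧
  ∀ (a : α) (i j : ℕ), ConsecOcc v a i j → v (i + 1) ≠ v (j + 1)

/-- The letter `a` has frequency `ρ` in the sequence `v`. -/
def HasFreq [DecidableEq α] (v : ℕ → α) (a : α) (ρ : ℝ) : Prop :=
  Tendsto (fun n => ((factorAt v 0 n).count a : ℝ) / n) atTop (nhds ρ)

/-- Factor complexity of a sequence. -/
noncomputable def complexity (v : ℕ → α) (n : ℕ) : ℕ :=
  Set.ncard {u : List α | IsFactor v u ∧ u.length = n}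

/-- Sturmian sequences: aperiodic binary sequences of factor complexity `n + 1`.
Convention: the letter `a` is `false`, the letter `b` is `true`. -/
def Sturmian (u : ℕ → Bool) : Prop :=
  ¬ EventuallyPeriodic u ∧ ∀ n, complexity u n = n + 1

/-- Prepending a letter to a sequence. -/
def consSeq (c : α) (v : ℕ → α) : ℕ → α := fun n =>
  match n with
  | 0 => c
  | Nat.succ m => v m

/-- A standard sequence: a Sturmian sequence `u` such that `a·u` and `b·u` are Sturmian. -/
def IsStandard (u : ℕ → Bool) : Prop :=
  Sturmian u ∧ Sturmian (consSeq false u) ∧ Sturmian (consSeq true u)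

/-- The slope of a binary sequence, with the convention `ρ_b > ρ_a` (`a = false`, `b = true`). -/
def HasSlope (u : ℕ → Bool) (θ : ℝ) : Prop :=
  ∃ ρa ρb : ℝ, HasFreq u false ρa ∧ HasFreq u true ρb ∧ ρa < ρb ∧ θ = ρa / ρb

/-- `θ` has the (infinite) continued fraction expansion `[0; a 1, a 2, a 3, …]`:
there are complete quotients' fractional parts `t n ∈ (0,1)` with `t 0 = θ` and
`1 / t n = a (n+1) + t (n+1)` for all `n`. (The value `a 0` is irrelevant.) -/
def HasCF (θ : ℝ) (a : ℕ → ℕ) : Prop :=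
  ∃ t : ℕ → ℝ, t 0 = θ ∧ ∀ n, 0 < t n ∧ t n < 1 ∧ 1 / t n = (a (n + 1) : ℝ) + t (n + 1)

/-- Number of positions `< n` where `u` takes the value `c`. -/
def countBefore (u : ℕ → Bool) (c : Bool) (n : ℕ) : ℕ :=
  ((List.range n).filter fun i => u i = c).length

/-- The colouring of a binary sequence `u` by `y` (on the `a = false` positions)
and `y'` (on the `b = true` positions). -/
def colour (u : ℕ → Bool) (y : ℕ → α) (y' : ℕ → β) : ℕ → α ⊕ β := fun n =>
  if u n = false then Sum.inl (y (countBefore u false n))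
  else Sum.inr (y' (countBefore u true n))

/-- A constant gap sequence: periodic, and consecutive occurrences of each occurring
letter are at a constant distance. -/
def ConstantGap (y : ℕ → α) : Prop :=
  (∃ p, 0 < p ∧ ∀ n, y (n + p) = y n) ∧
  ∀ c : α, (∃ i, y i = c) → ∃ g, 0 < g ∧ ∀ i j, ConsecOcc y c i j → j - i = g

/-- The discolouration (projection) map: letters of the first alphabet go to `a = false`,
letters of the second alphabet go to `b = true`. -/
def proj : α ⊕ β → Bool := Sum.elim (fun _ => false) (fun _ => true)

/-- `v` is a return word to `w` in the sequence `z`. -/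
def IsReturnWord (z : ℕ → α) (w v : List α) : Prop :=
  ∃ i j : ℕ, i < j ∧ OccursAt z w i ∧ OccursAt z w j ∧
    (∀ k, i < k → k < j → ¬ OccursAt z w k) ∧ v = factorAt z i (j - i)

def RightSpecial (z : ℕ → α) (w : List α) : Prop :=
  ∃ a b : α, a ≠ b ∧ IsFactor z (w ++ [a]) ∧ IsFactor z (w ++ [b])

def LeftSpecial (z : ℕ → α) (w : List α) : Prop :=
  ∃ a b : α, a ≠ b ∧ IsFactor z (a :: w) ∧ IsFactor z (b :: w)

def Bispecial (z : ℕ → α) (w : List α) : Prop := LeftSpecial z w ∧ RightSpecial z w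

/-- `o` enumerates, in increasing order, all occurrences of `w` in `z`. -/
def IsOccEnum (z : ℕ → α) (w : List α) (o : ℕ → ℕ) : Prop :=
  StrictMono o ∧ (∀ n, OccursAt z w (o n)) ∧ ∀ i, OccursAt z w i → ∃ n, o n = i

/-- The derived sequence of `z` with respect to the occurrence enumeration `o` of a factor:
its `n`-th letter is the return word between the `n`-th and `(n+1)`-st occurrences. -/
def derivedSeq (z : ℕ → α) (o : ℕ → ℕ) : ℕ → List α :=
  fun n => factorAt z (o n) (o (n + 1) - o n)

/-- The slope of a sequence over a two-letter alphabet: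
the ratio of the smaller letter frequency to the larger one. -/
def HasSlope2 {γ : Type*} [DecidableEq γ] (z : ℕ → γ) (θ : ℝ) : Prop :=
  ∃ (c c' : γ) (ρ ρ' : ℝ), c ≠ c' ∧ (∀ n, z n = c ∨ z n = c') ∧
    HasFreq z c ρ ∧ HasFreq z c' ρ' ∧ ρ < ρ' ∧ θ = ρ / ρ'

/-- The purely cyclic constant gap sequence `(0 1 ⋯ (δ-1))^ω` over `ZMod δ`. -/
def cyc (δ : ℕ) : ℕ → ZMod δ := fun n => (n : ZMod δ)

/-- The colouring `colour(u, (1 2 ⋯ δ)^ω, (1' 2' ⋯ δ')^ω)` over `2δ` letters. -/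
def colourCyc (δ : ℕ) (u : ℕ → Bool) : ℕ → ZMod δ ⊕ ZMod δ := colour u (cyc δ) (cyc δ)


/-! ### Auxiliary development -/

section Aux

variable {u : ℕ → Bool}

@[simp] lemma factorAt_length (v : ℕ → α) (i n : ℕ) : (factorAt v i n).length = n := by
  simp [factorAt]

lemma isFactor_factorAt (v : ℕ → α) (i n : ℕ) : IsFactor v (factorAt v i n) := by
  exact ⟨i, by simp⟩

lemma factorAt_getElem (v : ℕ → α) (i n k : ℕ) (hk : k < n) :
    (factorAt v i n)[k]'(by simpa using hk) = v (i + k) := by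
  simp [factorAt]

lemma letters_of_factorAt_eq {v : ℕ → α} {p q n : ℕ}
    (h : factorAt v p n = factorAt v q n) : ∀ k, k < n → v (p + k) = v (q + k) := by
  intro k hk
  have h1 : (factorAt v p n)[k]'(by simpa using hk) = (factorAt v q n)[k]'(by simpa using hk) := by
    congr 1
  rwa [factorAt_getElem v p n k hk, factorAt_getElem v q n k hk] at h1

lemma complexity_eq_ncard (v : ℕ → α) (n : ℕ) :
    complexity v n = Set.ncard {w : List α | IsFactor v w ∧ w.length = n} := rfl

lemma factorSet_finite [Finite α] (v : ℕ → α) (n : ℕ) :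
    {w : List α | IsFactor v w ∧ w.length = n}.Finite := by
  have : {w : List α | IsFactor v w ∧ w.length = n} ⊆
      Set.range (fun g : Fin n → α => List.ofFn g) := by
    rintro w ⟨-, hlen⟩
    refine ⟨fun i => w[(i : ℕ)]'(by omega), ?_⟩
    apply List.ext_getElem (by simp [hlen])
    intro k h1 h2
    simp
  exact Set.Finite.subset (Set.finite_range _) this

/-- If there are pairwise distinct windows of length `L` at the positions in `ps`, then
`ps.length ≤ complexity v L`. -/
lemma le_complexity_of_pairwise [Finite α] [DecidableEq α] (v : ℕ → α) (L : ℕ) (ps : List ℕ)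
    (h : ps.Pairwise (fun p q => factorAt v p L ≠ factorAt v q L)) :
    ps.length ≤ complexity v L := by
  classical
  have hnodup : (ps.map (fun p => factorAt v p L)).Nodup := by
    induction ps with
    | nil => simp
    | cons a l ih =>
      rcases List.pairwise_cons.1 h with ⟨ha, hl⟩
      simp only [List.map_cons, List.nodup_cons]
      exact ⟨fun hmem => by
        rcases List.mem_map.1 hmem with ⟨b, hb, hbe⟩
        exact ha b hb hbe.symm, ih hl⟩
  have hsub : ↑(ps.map (fun p => factorAt v p L)).toFinset ⊆
      {w : List α | IsFactor v w ∧ w.length = L} := by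
    intro w hw
    simp only [List.coe_toFinset, Set.mem_setOf_eq, List.mem_map] at hw ⊢
    rcases hw with ⟨p, _, rfl⟩
    exact ⟨isFactor_factorAt v p L, by simp⟩
  have h1 : (ps.map (fun p => factorAt v p L)).toFinset.card = ps.length := by
    rw [List.toFinset_card_of_nodup hnodup, List.length_map]
  calc ps.length = ((ps.map (fun p => factorAt v p L)).toFinset : Set (List α)).ncard := by
        rw [Set.ncard_coe_finset, h1]
    _ ≤ complexity v L := by
        rw [complexity_eq_ncard]
        exact Set.ncard_le_ncard hsub (factorSet_finite v L)

end Aux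
section Counting

variable (u : ℕ → Bool)

lemma countBefore_succ (c : Bool) (n : ℕ) :
    countBefore u c (n + 1) = countBefore u c n + (if u n = c then 1 else 0) := by
  unfold countBefore
  rw [List.range_succ, List.filter_append]
  by_cases h : u n = c <;> simp [h]

lemma countBefore_mono (c : Bool) : Monotone (countBefore u c) := by
  apply monotone_nat_of_le_succ
  intro n
  rw [countBefore_succ]
  omega

lemma countBefore_le (c : Bool) (n : ℕ) : countBefore u c n ≤ n := by
  induction n with
  | zero => simp [countBefore]
  | succ n ih => rw [countBefore_succ]; split <;> omega

lemma countBefore_add_compl (n : ℕ) :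
    countBefore u true n + countBefore u false n = n := by
  induction n with
  | zero => simp [countBefore]
  | succ n ih =>
    rw [countBefore_succ, countBefore_succ]
    cases h : u n <;> simp [h] <;> omega

lemma count_factorAt_eq_countBefore (c : Bool) (n : ℕ) :
    (factorAt u 0 n).count c = countBefore u c n := by
  unfold factorAt countBefore
  rw [List.count_eq_countP, List.countP_map, List.countP_eq_length_filter]
  congr 1
  apply List.filter_congr
  intro i _
  simp only [Function.comp, Nat.zero_add]
  rw [Bool.beq_eq_decide_eq]

lemma hasFreq_tendsto {c : Bool} {ρ : ℝ} (h : HasFreq u c ρ) :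
    Filter.Tendsto (fun n => (countBefore u c n : ℝ) / n) Filter.atTop (nhds ρ) := by
  have := h
  unfold HasFreq at this
  refine this.congr (fun n => ?_)
  rw [count_factorAt_eq_countBefore]

lemma freq_nonneg {c : Bool} {ρ : ℝ} (h : HasFreq u c ρ) : 0 ≤ ρ := by
  refine ge_of_tendsto' (hasFreq_tendsto u h) (fun n => ?_)
  positivity

lemma freq_sum_one {ρa ρb : ℝ} (ha : HasFreq u false ρa) (hb : HasFreq u true ρb) :
    ρa + ρb = 1 := by
  have h1 : Filter.Tendsto (fun n => (countBefore u false n : ℝ) / n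
      + (countBefore u true n : ℝ) / n) Filter.atTop (nhds (ρa + ρb)) :=
    (hasFreq_tendsto u ha).add (hasFreq_tendsto u hb)
  have h2 : (fun n => (countBefore u false n : ℝ) / n + (countBefore u true n : ℝ) / n)
      =ᶠ[Filter.atTop] (fun _ => (1 : ℝ)) := by
    filter_upwards [Filter.eventually_ge_atTop 1] with n hn
    have hsum := countBefore_add_compl u n
    have hn0 : (n : ℝ) ≠ 0 := by positivity
    have : (countBefore u false n : ℝ) + (countBefore u true n : ℝ) = (n : ℝ) := by
      exact_mod_cast congrArg (Nat.cast : ℕ → ℝ) (by omega : countBefore u false n + countBefore u true n = n)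
    field_simp
    linarith
  have h3 : Filter.Tendsto (fun _ : ℕ => (1 : ℝ)) Filter.atTop (nhds (ρa + ρb)) :=
    h1.congr' h2
  have := tendsto_nhds_unique h3 tendsto_const_nhds
  linarith

/-- Subsequence along a function tending to infinity. -/
lemma freq_tendsto_comp {c : Bool} {ρ : ℝ} (h : HasFreq u c ρ) {g : ℕ → ℕ}
    (hg : Filter.Tendsto g Filter.atTop Filter.atTop) :
    Filter.Tendsto (fun k => (countBefore u c (g k) : ℝ) / (g k)) Filter.atTop (nhds ρ) :=
  (hasFreq_tendsto u h).comp hg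

lemma tendsto_two_mul : Filter.Tendsto (fun k : ℕ => 2 * k) Filter.atTop Filter.atTop := by
  apply Filter.tendsto_atTop_atTop.mpr
  exact fun b => ⟨b, fun a ha => by omega⟩

lemma tendsto_three_mul : Filter.Tendsto (fun k : ℕ => 3 * k) Filter.atTop Filter.atTop := by
  apply Filter.tendsto_atTop_atTop.mpr
  exact fun b => ⟨b, fun a ha => by omega⟩

/-- If `countBefore u c (m*k) ≤ k` for all `k`, then the frequency of `c` is at most `1/m`. -/
lemma freq_le_of_spacing {c : Bool} {ρ : ℝ} (h : HasFreq u c ρ) (m : ℕ) (hm : 0 < m)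
    (hcount : ∀ k, countBefore u c (m * k) ≤ k) : ρ ≤ 1 / m := by
  have hg : Filter.Tendsto (fun k : ℕ => m * k) Filter.atTop Filter.atTop := by
    apply Filter.tendsto_atTop_atTop.mpr
    exact fun b => ⟨b, fun a ha => by nlinarith⟩
  have h1 := freq_tendsto_comp u h hg
  refine le_of_tendsto h1 ?_
  filter_upwards [Filter.eventually_ge_atTop 1] with k hk
  have hk0 : (0:ℝ) < (m * k : ℕ) := by positivity
  rw [div_le_div_iff₀ hk0 (by positivity : (0:ℝ) < m)]
  have h2 := hcount k
  have h2' : (countBefore u c (m*k) : ℝ) ≤ (k : ℝ) := by exact_mod_cast h2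
  push_cast
  nlinarith [h2']

end Counting
section Comb

variable {u : ℕ → Bool}

lemma exists_letter (hap : ¬ EventuallyPeriodic u) (c : Bool) : ∃ i, u i = c := by
  by_contra h
  push_neg at h
  exact hap ⟨1, one_pos, 0, fun n _ => by
    have h1 := h n; have h2 := h (n+1)
    cases hn : u n <;> cases hm : u (n+1) <;> simp_all⟩

lemma exists_ft (hap : ¬ EventuallyPeriodic u) : ∃ i, u i = false ∧ u (i + 1) = true := by
  by_contra h
  push_neg at h
  obtain ⟨i₀, hi₀⟩ := exists_letter hap false
  have hconst : ∀ k, u (i₀ + k) = false := by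
    intro k
    induction k with
    | zero => simpa using hi₀
    | succ k ih =>
      have := h (i₀ + k) ih
      rw [← Nat.add_assoc] at *
      cases hv : u (i₀ + k + 1)
      · rfl
      · exact absurd hv this
  refine hap ⟨1, one_pos, i₀, fun n hn => ?_⟩
  obtain ⟨k, rfl⟩ := Nat.exists_eq_add_of_le hn
  rw [show i₀ + k + 1 = i₀ + (k+1) by ring, hconst (k+1), hconst k]

lemma exists_tf (hap : ¬ EventuallyPeriodic u) : ∃ i, u i = true ∧ u (i + 1) = false := by
  by_contra h
  push_neg at h
  obtain ⟨i₀, hi₀⟩ := exists_letter hap true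
  have hconst : ∀ k, u (i₀ + k) = true := by
    intro k
    induction k with
    | zero => simpa using hi₀
    | succ k ih =>
      have := h (i₀ + k) ih
      rw [← Nat.add_assoc] at *
      cases hv : u (i₀ + k + 1)
      · exact absurd hv this
      · rfl
  refine hap ⟨1, one_pos, i₀, fun n hn => ?_⟩
  obtain ⟨k, rfl⟩ := Nat.exists_eq_add_of_le hn
  rw [show i₀ + k + 1 = i₀ + (k+1) by ring, hconst (k+1), hconst k]

/-- No two adjacent `false`s. -/
lemma noFF (hap : ¬ EventuallyPeriodic u) (hc2 : complexity u 2 = 3)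
    {ρb : ℝ} (hb : HasFreq u true ρb) (hhalf : 1/2 < ρb) :
    ∀ i, u i = false → u (i + 1) = true := by
  by_contra h
  push_neg at h
  obtain ⟨i₀, hi₀, hi₀'⟩ := h
  have hi₀'' : u (i₀ + 1) = false := by cases hv : u (i₀+1) <;> simp_all
  -- first: no adjacent trues
  have no11 : ∀ j, ¬ (u j = true ∧ u (j + 1) = true) := by
    rintro j ⟨hj, hj'⟩
    obtain ⟨i₁, h1, h1'⟩ := exists_ft hap
    obtain ⟨i₂, h2, h2'⟩ := exists_tf hap
    have key : (4 : ℕ) ≤ complexity u 2 := by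
      have := le_complexity_of_pairwise u 2 [i₀, j, i₁, i₂] ?_
      · simpa using this
      · refine List.pairwise_cons.2 ⟨?_, List.pairwise_cons.2 ⟨?_, List.pairwise_cons.2
          ⟨?_, List.pairwise_cons.2 ⟨by simp, List.Pairwise.nil⟩⟩⟩⟩
        · intro q hq heq
          have h0 := letters_of_factorAt_eq heq 0 (by norm_num)
          have h1'' := letters_of_factorAt_eq heq 1 (by norm_num)
          simp only [Nat.add_zero] at h0 h1''
          fin_cases hq <;> simp_all
        · intro q hq heq
          have h0 := letters_of_factorAt_eq heq 0 (by norm_num)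
          have h1'' := letters_of_factorAt_eq heq 1 (by norm_num)
          simp only [Nat.add_zero] at h0 h1''
          fin_cases hq <;> simp_all
        · intro q hq heq
          have h0 := letters_of_factorAt_eq heq 0 (by norm_num)
          have h1'' := letters_of_factorAt_eq heq 1 (by norm_num)
          simp only [Nat.add_zero] at h0 h1''
          fin_cases hq <;> simp_all
    omega
  -- spacing: at most one true in each pair
  have hsp : ∀ k, countBefore u true (2 * k) ≤ k := by
    intro k
    induction k with
    | zero => simp [countBefore]
    | succ k ih =>
      have e1 : 2 * (k + 1) = (2 * k + 1) + 1 := by ring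
      rw [e1, countBefore_succ, countBefore_succ]
      by_cases hA : u (2 * k) = true
      · by_cases hB : u (2 * k + 1) = true
        · exact absurd ⟨hA, hB⟩ (no11 (2 * k))
        · rw [if_pos hA, if_neg hB]; omega
      · by_cases hB : u (2 * k + 1) = true
        · rw [if_pos hB, if_neg hA]; omega
        · rw [if_neg hA, if_neg hB]; omega
  have := freq_le_of_spacing u hb 2 (by norm_num) hsp
  rw [show ((2:ℕ):ℝ) = 2 by norm_num] at this
  linarith

/-- `11`-starts occur beyond every bound. -/
lemma starts_unbounded (hap : ¬ EventuallyPeriodic u)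
    (hC0 : ∀ i, u i = false → u (i + 1) = true) :
    ∀ N, ∃ i, N ≤ i ∧ u i = true ∧ u (i + 1) = true := by
  intro N
  by_contra h
  push_neg at h
  refine hap ⟨2, by norm_num, N, fun n hn => ?_⟩
  cases hv : u n
  · have h1 := hC0 n hv
    have h2 := h (n+1) (by omega) h1
    have hv2 : u (n + 1 + 1) = false := by
      cases hw : u (n + 1 + 1)
      · rfl
      · exact absurd hw h2
    simp [show n + 2 = n + 1 + 1 by ring, hv2, hv]
  · have h2 := h n hn hv
    have h1 : u (n+1) = false := by
      cases hv2 : u (n+1)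
      · rfl
      · exact absurd hv2 h2
    have := hC0 (n+1) h1
    simp [show n + 2 = n + 1 + 1 by ring, this, hv]

/-- Alternation between `11`-occurrences. -/
lemma alt_lemma (hC0 : ∀ i, u i = false → u (i + 1) = true) {a b : ℕ} (ha : u a = true)
    (hns : ∀ p, a ≤ p → p < b → ¬(u p = true ∧ u (p + 1) = true)) :
    ∀ t, a + t ≤ b → (u (a + t) = true ↔ t % 2 = 0) := by
  intro t
  induction t with
  | zero => intro _; simpa using ha
  | succ t ih =>
    intro hle
    have ht : a + t ≤ b := by omega
    have ihh := ih ht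
    rcases Nat.even_or_odd t with he | ho
    · have h0 : t % 2 = 0 := Nat.even_iff.1 he
      have hu : u (a + t) = true := ihh.2 h0
      have := hns (a + t) (by omega) (by omega)
      have h1 : u (a + t + 1) = false := by
        cases hv : u (a + t + 1)
        · rfl
        · exact absurd ⟨hu, hv⟩ this
      rw [show a + (t+1) = a + t + 1 by ring, h1]
      have hm : (t+1) % 2 = 1 := by omega
      simp [hm]
    · have h0 : t % 2 = 1 := Nat.odd_iff.1 ho
      have hu : u (a + t) = false := by
        cases hv : u (a + t)
        · rfl
        · exact absurd (ihh.1 hv) (by omega)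
      have h1 := hC0 (a + t) hu
      rw [show a + (t+1) = a + t + 1 by ring, h1]
      have hm : (t+1) % 2 = 0 := by omega
      simp [hm]

end Comb
section Comb2

variable {u : ℕ → Bool}

/-- No three adjacent `true`s. -/
lemma no111 (hap : ¬ EventuallyPeriodic u) (hc3 : complexity u 3 = 4)
    (hC0 : ∀ i, u i = false → u (i + 1) = true)
    {ρa : ℝ} (ha : HasFreq u false ρa) (hthird : 1/3 < ρa) :
    ∀ i, ¬ (u i = true ∧ u (i + 1) = true ∧ u (i + 2) = true) := by
  by_contra h
  push_neg at h
  obtain ⟨i₀, h0, h1, h2⟩ := h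
  -- the (1,0,1) window
  obtain ⟨j1, hj1, hj1'⟩ := exists_tf hap
  have hj1'' : u (j1 + 2) = true := by
    have := hC0 (j1 + 1) hj1'
    simpa [show j1 + 1 + 1 = j1 + 2 by ring] using this
  -- the (0,1,0) window
  have hex010 : ∃ i, u i = false ∧ u (i + 1) = true ∧ u (i + 2) = false := by
    by_contra h010
    push_neg at h010
    have hsp : ∀ k, countBefore u false (3 * k) ≤ k := by
      intro k
      induction k with
      | zero => simp [countBefore]
      | succ k ih =>
        have e1 : 3 * (k + 1) = ((3 * k + 1) + 1) + 1 := by ring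
        rw [e1, countBefore_succ, countBefore_succ, countBefore_succ]
        have key : ¬ (u (3 * k) = false ∧ u (3 * k + 1) = false) ∧
            ¬ (u (3 * k) = false ∧ u (3 * k + 1 + 1) = false) ∧
            ¬ (u (3 * k + 1) = false ∧ u (3 * k + 1 + 1) = false) := by
          refine ⟨?_, ?_, ?_⟩
          · rintro ⟨hA, hB⟩; exact absurd (hC0 _ hA) (by simp [hB])
          · rintro ⟨hA, hB⟩
            have := hC0 _ hA
            exact absurd hB (by
              have := h010 (3 * k) hA this
              simpa [show 3 * k + 2 = 3 * k + 1 + 1 by ring] using this)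
          · rintro ⟨hA, hB⟩; exact absurd (hC0 _ hA) (by simp [hB])
        by_cases hA : u (3 * k) = false <;> by_cases hB : u (3 * k + 1) = false <;>
          by_cases hC : u (3 * k + 1 + 1) = false
        · exact absurd ⟨hA, hB⟩ key.1
        · exact absurd ⟨hA, hB⟩ key.1
        · exact absurd ⟨hA, hC⟩ key.2.1
        · rw [if_pos hA, if_neg hB, if_neg hC]; omega
        · exact absurd ⟨hB, hC⟩ key.2.2
        · rw [if_neg hA, if_pos hB, if_neg hC]; omega
        · rw [if_neg hA, if_neg hB, if_pos hC]; omega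
        · rw [if_neg hA, if_neg hB, if_neg hC]; omega
    have := freq_le_of_spacing u ha 3 (by norm_num) hsp
    rw [show ((3:ℕ):ℝ) = 3 by norm_num] at this
    linarith
  obtain ⟨j2, hj2, hj2', hj2''⟩ := hex010
  -- the (0,1,1) window
  have hex011 : ∃ i, u i = false ∧ u (i + 1) = true ∧ u (i + 2) = true := by
    by_contra h011
    push_neg at h011
    have key : ∀ p, u p = true → u (p + 1) = true → ∀ k, k ≤ p + 1 → u k = true := by
      intro p
      induction p using Nat.strong_induction_on with
      | _ p ih =>
        intro hp hp' k hk
        rcases Nat.lt_or_ge k (p + 1) with hlt | hge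
        · rcases Nat.eq_zero_or_pos p with rfl | hpos
          · interval_cases k; exact hp
          · obtain ⟨q, rfl⟩ := Nat.exists_eq_add_of_lt hpos
            rw [Nat.zero_add] at *
            have hq : u q = true := by
              cases hv : u q
              · exact absurd hp' (by
                  have := h011 q hv (by simpa using hp)
                  simpa [show q + 2 = q + 1 + 1 by ring] using this)
              · rfl
            exact ih q (by omega) hq (by simpa using hp) k (by omega)
        · have : k = p + 1 := by omega
          rw [this]; exact hp'
    have hall : ∀ k, u k = true := by
      intro k
      obtain ⟨p, hp, hp', hp''⟩ := starts_unbounded hap hC0 k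
      exact key p hp' hp'' k (by omega)
    exact hap ⟨1, one_pos, 0, fun n _ => by rw [hall (n+1), hall n]⟩
  obtain ⟨j3, hj3, hj3', hj3''⟩ := hex011
  -- the (1,1,0) window
  have hex110 : ∃ i, u i = true ∧ u (i + 1) = true ∧ u (i + 2) = false := by
    by_contra h110
    push_neg at h110
    have key : ∀ k, u (i₀ + k) = true ∧ u (i₀ + k + 1) = true := by
      intro k
      induction k with
      | zero => exact ⟨by simpa using h0, by simpa using h1⟩
      | succ k ih =>
        have h3 : u (i₀ + k + 2) = true := by
          cases hv : u (i₀ + k + 2)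
          · exact absurd hv (h110 (i₀ + k) ih.1 ih.2)
          · rfl
        exact ⟨by simpa [show i₀ + (k+1) = i₀ + k + 1 by ring] using ih.2,
          by simpa [show i₀ + (k+1) + 1 = i₀ + k + 2 by ring] using h3⟩
    refine hap ⟨1, one_pos, i₀, fun n hn => ?_⟩
    obtain ⟨k, rfl⟩ := Nat.exists_eq_add_of_le hn
    have := (key k).1
    have := (key (k+1)).1
    simp_all [show i₀ + k + 1 = i₀ + (k+1) by ring]
  obtain ⟨j4, hj4, hj4', hj4''⟩ := hex110
  -- five distinct windows of length 3
  have key : (5 : ℕ) ≤ complexity u 3 := by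
    have := le_complexity_of_pairwise u 3 [i₀, j1, j2, j3, j4] ?_
    · simpa using this
    · have hdist : ∀ p q : ℕ, (u p ≠ u q ∨ u (p+1) ≠ u (q+1) ∨ u (p+2) ≠ u (q+2)) →
          factorAt u p 3 ≠ factorAt u q 3 := by
        intro p q hpq heq
        have e0 := letters_of_factorAt_eq heq 0 (by norm_num)
        have e1 := letters_of_factorAt_eq heq 1 (by norm_num)
        have e2 := letters_of_factorAt_eq heq 2 (by norm_num)
        simp only [Nat.add_zero] at e0 e1 e2
        rcases hpq with h | h | h <;> exact h (by assumption)
      refine List.pairwise_cons.2 ⟨?_, List.pairwise_cons.2 ⟨?_, List.pairwise_cons.2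
        ⟨?_, List.pairwise_cons.2 ⟨?_, List.pairwise_cons.2 ⟨by simp, List.Pairwise.nil⟩⟩⟩⟩⟩
      · intro q hq
        fin_cases hq <;> [skip; skip; skip; skip] <;> apply hdist <;> simp_all
      · intro q hq
        fin_cases hq <;> apply hdist <;> simp_all
      · intro q hq
        fin_cases hq <;> apply hdist <;> simp_all
      · intro q hq
        fin_cases hq <;> apply hdist <;> simp_all
  omega

end Comb2
section Density

variable {u : ℕ → Bool}

/-- The number of `11`-starts up to `n`. -/
def startCount (u : ℕ → Bool) : ℕ → ℕ := countBefore (fun i => u i && u (i + 1)) true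

lemma startCount_succ (n : ℕ) :
    startCount u (n + 1) = startCount u n + (if (u n && u (n + 1)) = true then 1 else 0) :=
  countBefore_succ _ _ _

lemma startCount_mono : Monotone (startCount u) := countBefore_mono _ _

lemma startCount_le_diff (hC0 : ∀ i, u i = false → u (i + 1) = true) :
    ∀ n, startCount u n + countBefore u false n
      ≤ countBefore u true n + (if u n = true then 1 else 0) := by
  intro n
  induction n with
  | zero =>
    simp only [startCount, countBefore, List.range_zero, List.filter_nil, List.length_nil]
    split <;> omega
  | succ n ih =>
    rw [startCount_succ, countBefore_succ, countBefore_succ]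
    cases hA : u n
    · have hB : u (n + 1) = true := hC0 n hA
      rw [if_neg (show ¬ u n = true by simp [hA])] at ih
      rw [hB]
      norm_num
      omega
    · rw [if_pos hA] at ih
      cases hB : u (n + 1) <;> norm_num <;> omega

/-- If every `11`-start is followed by another within distance `s`, then the frequency
difference is at least `1/s`; contradiction if it is smaller. -/
lemma syndetic_contra (hC0 : ∀ i, u i = false → u (i + 1) = true)
    {ρa ρb : ℝ} (ha : HasFreq u false ρa) (hb : HasFreq u true ρb)
    {s : ℕ} (hs : 0 < s) (hdiff : ρb - ρa < 1 / (s : ℝ))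
    {i₁ : ℕ} (hi₁ : u i₁ = true ∧ u (i₁ + 1) = true)
    (hsyn : ∀ i, u i = true → u (i + 1) = true →
      ∃ j, i < j ∧ j ≤ i + s ∧ u j = true ∧ u (j + 1) = true) : False := by
  have hchain : ∀ k, ∃ x, (u x = true ∧ u (x + 1) = true) ∧ x ≤ i₁ + k * s ∧
      k + 1 ≤ startCount u (x + 1) := by
    intro k
    induction k with
    | zero =>
      refine ⟨i₁, hi₁, by omega, ?_⟩
      rw [startCount_succ]
      rw [if_pos (by simp [hi₁.1, hi₁.2])]
      omega
    | succ k ih =>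
      obtain ⟨x, hx, hxle, hsc⟩ := ih
      obtain ⟨j, hj1, hj2, hj3, hj4⟩ := hsyn x hx.1 hx.2
      have he : (k + 1) * s = k * s + s := by ring
      refine ⟨j, ⟨hj3, hj4⟩, by omega, ?_⟩
      rw [startCount_succ, if_pos (by simp [hj3, hj4])]
      have : startCount u (x + 1) ≤ startCount u j := startCount_mono (by omega)
      omega
  have hSC : ∀ k, k + 1 ≤ startCount u (i₁ + k * s + 1) := by
    intro k
    obtain ⟨x, _, hxle, hsc⟩ := hchain k
    exact le_trans hsc (startCount_mono (by omega))
  set g : ℕ → ℕ := fun k => i₁ + k * s + 1 with hg_def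
  have hg : Filter.Tendsto g Filter.atTop Filter.atTop := by
    apply Filter.tendsto_atTop_atTop.mpr
    exact fun b => ⟨b, fun a hab => by simp only [hg_def]; nlinarith⟩
  have hsR : (0 : ℝ) < (s : ℝ) := by exact_mod_cast hs
  have hA : Filter.Tendsto (fun k : ℕ => ((k : ℝ) + 1) / (g k : ℝ)) Filter.atTop
      (nhds ((s : ℝ)⁻¹)) := by
    have h1 : Filter.Tendsto (fun k : ℕ => ((1 : ℝ) + ((k : ℝ))⁻¹) / ((s : ℝ) + ((i₁ : ℝ) + 1) * ((k : ℝ))⁻¹))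
        Filter.atTop (nhds ((1 + 0) / ((s : ℝ) + ((i₁ : ℝ) + 1) * 0))) := by
      apply Filter.Tendsto.div
      · exact tendsto_const_nhds.add tendsto_inv_atTop_nhds_zero_nat
      · exact tendsto_const_nhds.add (tendsto_inv_atTop_nhds_zero_nat.const_mul _)
      · simp; positivity
    have h2 : ((1 : ℝ) + 0) / ((s : ℝ) + ((i₁ : ℝ) + 1) * 0) = (s : ℝ)⁻¹ := by
      rw [mul_zero, add_zero, add_zero, one_div]
    rw [h2] at h1
    refine Filter.Tendsto.congr' ?_ h1
    filter_upwards [Filter.eventually_ge_atTop 1] with k hk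
    have hk0 : (0 : ℝ) < (k : ℝ) := by exact_mod_cast hk
    have hgk : (g k : ℝ) = (i₁ : ℝ) + (k : ℝ) * (s : ℝ) + 1 := by
      simp only [hg_def]; push_cast; ring
    have hgkpos : (0 : ℝ) < (g k : ℝ) := by rw [hgk]; positivity
    have hden : (0 : ℝ) < (s : ℝ) + ((i₁ : ℝ) + 1) * ((k : ℝ))⁻¹ := by positivity
    have hne2 : (0:ℝ) < (i₁ : ℝ) + (k : ℝ) * (s : ℝ) + 1 := by positivity
    rw [hgk, div_eq_div_iff hden.ne' hne2.ne']
    field_simp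
    ring
  have hB : Filter.Tendsto (fun k : ℕ =>
      ((countBefore u true (g k) : ℝ) - (countBefore u false (g k) : ℝ) + 1) / (g k))
      Filter.atTop (nhds (ρb - ρa + 0)) := by
    have h1 : Filter.Tendsto (fun k : ℕ => (countBefore u true (g k) : ℝ) / (g k)
        - (countBefore u false (g k) : ℝ) / (g k) + 1 / (g k)) Filter.atTop
        (nhds (ρb - ρa + 0)) := by
      refine Filter.Tendsto.add (Filter.Tendsto.sub ?_ ?_) ?_
      · exact (hasFreq_tendsto u hb).comp hg
      · exact (hasFreq_tendsto u ha).comp hg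
      · exact tendsto_one_div_atTop_nhds_zero_nat.comp hg
    refine h1.congr (fun k => ?_)
    ring
  have hAB : ∀ k : ℕ, ((k : ℝ) + 1) / (g k : ℝ) ≤
      ((countBefore u true (g k) : ℝ) - (countBefore u false (g k) : ℝ) + 1) / (g k) := by
    intro k
    have hgk1 : 1 ≤ g k := by simp only [hg_def]; omega
    have hgpos : (0 : ℝ) < (g k : ℝ) := by exact_mod_cast hgk1
    have hdn := startCount_le_diff hC0 (g k)
    have hsck := hSC k
    have h1 : startCount u (g k) + countBefore u false (g k)
        ≤ countBefore u true (g k) + 1 := by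
      refine hdn.trans ?_
      split <;> omega
    have hnum : ((k : ℝ) + 1) ≤
        (countBefore u true (g k) : ℝ) - (countBefore u false (g k) : ℝ) + 1 := by
      have c1 : ((k + 1 : ℕ) : ℝ) ≤ (startCount u (g k) : ℝ) := by exact_mod_cast hsck
      have c2 : ((startCount u (g k) : ℕ) : ℝ) + ((countBefore u false (g k) : ℕ) : ℝ)
          ≤ ((countBefore u true (g k) : ℕ) : ℝ) + 1 := by exact_mod_cast h1
      push_cast at c1
      linarith
    gcongr
  have hfin := le_of_tendsto_of_tendsto' hA hB hAB
  rw [add_zero] at hfin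
  rw [one_div] at hdiff
  linarith

end Density
section Gap

variable {u : ℕ → Bool}

lemma bool_ne_true {b : Bool} (h : ¬ b = true) : b = false := by
  cases b
  · rfl
  · exact absurd rfl h

/-- Main gap lemma: no two consecutive `11`-starts at distance `2G-1` when `2G+1 ≤ δ`. -/
lemma no_close_starts (hap : ¬ EventuallyPeriodic u) (hcompl : ∀ n, complexity u n = n + 1)
    (hC0 : ∀ i, u i = false → u (i + 1) = true)
    {ρa ρb : ℝ} (ha : HasFreq u false ρa) (hb : HasFreq u true ρb)
    {δ : ℕ} (hδ : 6 ≤ δ) (hdiff : ρb - ρa < 1 / (δ : ℝ)) (hthird : 1/3 < ρa) :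
    ∀ G, 1 ≤ G → 2 * G + 1 ≤ δ →
      ∀ i₁, ¬ ((u i₁ = true ∧ u (i₁ + 1) = true) ∧
        (u (i₁ + (2*G - 1)) = true ∧ u (i₁ + (2*G - 1) + 1) = true) ∧
        (∀ k, i₁ < k → k < i₁ + (2*G - 1) → ¬ (u k = true ∧ u (k + 1) = true))) := by
  intro G
  induction G using Nat.strong_induction_on with
  | _ G ih =>
    intro hG1 hGδ i₁ hbad
    obtain ⟨hS1, hS2, hbetween⟩ := hbad
    rcases Nat.lt_or_ge G 2 with hG2 | hG2
    · -- G = 1 : this is a 111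
      have hG : G = 1 := by omega
      subst hG
      refine no111 hap (hcompl 3) hC0 ha hthird i₁ ⟨hS1.1, hS1.2, ?_⟩
      have := hS2.2
      simpa [show i₁ + (2*1 - 1) + 1 = i₁ + 2 by omega] using this
    -- G ≥ 2
    -- Step 1: a start with a long alternating zone after it.
    have hstep1 : ∃ i₀, (u i₀ = true ∧ u (i₀ + 1) = true) ∧
        ∀ k, i₀ < k → k ≤ i₀ + (2*G+1) → ¬ (u k = true ∧ u (k + 1) = true) := by
      by_contra hsyn
      push_neg at hsyn
      have hdiff' : ρb - ρa < 1 / ((2*G+1 : ℕ) : ℝ) := by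
        refine hdiff.trans_le ?_
        have h1 : (0:ℝ) < ((2*G+1 : ℕ) : ℝ) := by positivity
        have h2 : ((2*G+1 : ℕ) : ℝ) ≤ (δ : ℝ) := by exact_mod_cast hGδ
        exact one_div_le_one_div_of_le h1 h2
      refine syndetic_contra hC0 ha hb (by omega : 0 < 2*G+1) hdiff' hS1 ?_
      intro i hi hi'
      obtain ⟨k, hk1, hk2, hk3⟩ := hsyn i ⟨hi, hi'⟩
      exact ⟨k, hk1, hk2, hk3.1, hk3.2⟩
    obtain ⟨i₀, hi₀S, hi₀gap⟩ := hstep1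
    -- Step 2: least start after i₀
    have hnon : ∃ j, i₀ < j ∧ u j = true ∧ u (j + 1) = true := by
      obtain ⟨j, hj1, hj2, hj3⟩ := starts_unbounded hap hC0 (i₀ + 1)
      exact ⟨j, by omega, hj2, hj3⟩
    set p := Nat.find hnon with hp_def
    obtain ⟨hpgt, hpS, hpS'⟩ : i₀ < p ∧ u p = true ∧ u (p + 1) = true := Nat.find_spec hnon
    have hpmin : ∀ m, i₀ < m → m < p → ¬ (u m = true ∧ u (m + 1) = true) := by
      intro m hm1 hm2 hmS
      exact Nat.find_min hnon hm2 ⟨hm1, hmS.1, hmS.2⟩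
    have hpfar : i₀ + (2*G + 1) < p := by
      by_contra hle
      push_neg at hle
      exact hi₀gap p hpgt hle ⟨hpS, hpS'⟩
    -- Step 3: alternation facts
    have haltF : ∀ t, i₀ + 1 + t ≤ p → (u (i₀ + 1 + t) = true ↔ t % 2 = 0) := by
      refine alt_lemma hC0 hi₀S.2 ?_
      intro q hq1 hq2 hqS
      exact hpmin q (by omega) hq2 hqS
    set D := p - i₀ - 1 with hD_def
    have hpD : p = i₀ + 1 + D := by omega
    have hDeven : D % 2 = 0 := by
      have := (haltF D (by omega)).1 (by rw [← hpD]; exact hpS)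
      exact this
    have hDge : 2*G + 2 ≤ D := by omega
    have Fback : ∀ t, 1 ≤ t → t ≤ 2*G → (u (p - t) = true ↔ t % 2 = 0) := by
      intro t ht1 ht2
      have he : p - t = i₀ + 1 + (D - t) := by omega
      rw [he]
      rw [haltF (D - t) (by omega)]
      omega
    have haltI : ∀ t, t ≤ 2*G - 2 → (u (i₁ + 1 + t) = true ↔ t % 2 = 0) := by
      intro t ht
      refine alt_lemma (b := i₁ + (2*G - 1)) hC0 hS1.2 ?_ t (by omega)
      intro q hq1 hq2
      exact hbetween q (by omega) (by omega)
    have Fx : ∀ k, 1 ≤ k → k ≤ 2*G - 1 → (u (i₁ + k) = true ↔ k % 2 = 1) := by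
      intro k hk1 hk2
      have he : i₁ + k = i₁ + 1 + (k - 1) := by omega
      rw [he, haltI (k-1) (by omega)]
      omega
    have Fx2G : u (i₁ + 2*G) = true := by
      have := hS2.2
      rwa [show i₁ + (2*G-1) + 1 = i₁ + 2*G by omega] at this
    -- window letter values
    have vA1 : ∀ k, k ≤ 2*G + 1 → u (i₀ + 2 + k) = (decide ((k+1) % 2 = 0)) := by
      intro k hk
      have he : i₀ + 2 + k = i₀ + 1 + (k+1) := by omega
      rw [he]
      rcases Nat.even_or_odd (k+1) with hpar | hpar
      · have h0 : (k+1) % 2 = 0 := Nat.even_iff.1 hpar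
        rw [(haltF (k+1) (by omega)).2 h0]
        simp [h0]
      · have h0 : (k+1) % 2 = 1 := Nat.odd_iff.1 hpar
        have := bool_ne_true (fun hh => by have := (haltF (k+1) (by omega)).1 hh; omega)
        rw [this]
        simp [h0]
    have vA2 : ∀ k, k ≤ 2*G + 1 → u (i₀ + 1 + k) = (decide (k % 2 = 0)) := by
      intro k hk
      rcases Nat.even_or_odd k with hpar | hpar
      · have h0 : k % 2 = 0 := Nat.even_iff.1 hpar
        rw [(haltF k (by omega)).2 h0]
        simp [h0]
      · have h0 : k % 2 = 1 := Nat.odd_iff.1 hpar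
        have := bool_ne_true (fun hh => by have := (haltF k (by omega)).1 hh; omega)
        rw [this]
        simp [h0]
    have vX2 : ∀ k, 1 ≤ k → k ≤ 2*G + 1 → u (i₀ + k) = (decide (k % 2 = 1)) := by
      intro k hk1 hk
      have he : i₀ + k = i₀ + 1 + (k - 1) := by omega
      rw [he]
      rcases Nat.even_or_odd (k-1) with hpar | hpar
      · have h0 : (k-1) % 2 = 0 := Nat.even_iff.1 hpar
        rw [(haltF (k-1) (by omega)).2 h0]
        have : k % 2 = 1 := by omega
        simp [this]
      · have h0 : (k-1) % 2 = 1 := Nat.odd_iff.1 hpar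
        have := bool_ne_true (fun hh => by have := (haltF (k-1) (by omega)).1 hh; omega)
        rw [this]
        have : k % 2 = 0 := by omega
        simp [this]
    have vX1 : ∀ k, 1 ≤ k → k ≤ 2*G - 1 → u (i₁ + k) = (decide (k % 2 = 1)) := by
      intro k hk1 hk2
      rcases Nat.even_or_odd k with hpar | hpar
      · have h0 : k % 2 = 0 := Nat.even_iff.1 hpar
        have := bool_ne_true (fun hh => by have := (Fx k hk1 hk2).1 hh; omega)
        rw [this]
        simp [h0]
      · have h0 : k % 2 = 1 := Nat.odd_iff.1 hpar
        rw [(Fx k hk1 hk2).2 h0]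
        simp [h0]
    have vW : ∀ o k, 1 ≤ o → o ≤ 2*G → k < o → u (p - o + k) = (decide ((o - k) % 2 = 0)) := by
      intro o k ho1 ho2 hko
      have he : p - o + k = p - (o - k) := by omega
      rw [he]
      rcases Nat.even_or_odd (o - k) with hpar | hpar
      · have h0 : (o-k) % 2 = 0 := Nat.even_iff.1 hpar
        rw [(Fback (o-k) (by omega) (by omega)).2 h0]
        simp [h0]
      · have h0 : (o-k) % 2 = 1 := Nat.odd_iff.1 hpar
        have := bool_ne_true (fun hh => by have := (Fback (o-k) (by omega) (by omega)).1 hh; omega)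
        rw [this]
        simp [h0]
    have vWo : ∀ o, o ≤ 2*G → u (p - o + o) = true := by
      intro o ho
      rw [show p - o + o = p by omega]
      exact hpS
    have vWo1 : ∀ o, o ≤ 2*G → u (p - o + (o+1)) = true := by
      intro o ho
      rw [show p - o + (o+1) = p + 1 by omega]
      exact hpS'
    -- the 2G+4 pairwise distinct windows of length 2G+2 contradict complexity
    have hdiffer : ∀ (a b k : ℕ), k < 2*G+2 → u (a + k) ≠ u (b + k) →
        factorAt u a (2*G+2) ≠ factorAt u b (2*G+2) := by
      intro a b k hk hne heq
      exact hne (letters_of_factorAt_eq heq k hk)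
    have hG2G : (2:ℕ) ≤ 2*G - 1 := by omega
    -- head-vs-w comparisons
    have cross : ∀ o, 1 ≤ o → o ≤ 2*G →
        factorAt u (i₀+2) (2*G+2) ≠ factorAt u (p - o) (2*G+2) ∧
        factorAt u (i₀+1) (2*G+2) ≠ factorAt u (p - o) (2*G+2) ∧
        factorAt u i₀ (2*G+2) ≠ factorAt u (p - o) (2*G+2) ∧
        factorAt u i₁ (2*G+2) ≠ factorAt u (p - o) (2*G+2) := by
      intro o ho1 ho2
      rcases Nat.even_or_odd o with hpar | hpar
      · have ho : o % 2 = 0 := Nat.even_iff.1 hpar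
        have ho2' : 2 ≤ o := by omega
        refine ⟨hdiffer _ _ o (by omega) ?_, hdiffer _ _ (o+1) (by omega) ?_,
          hdiffer _ _ 1 (by omega) ?_, hdiffer _ _ 1 (by omega) ?_⟩
        · rw [vA1 o (by omega), vWo o (by omega)]
          simp [Nat.add_mod, ho]
        · rw [vA2 (o+1) (by omega), vWo1 o (by omega)]
          simp [Nat.add_mod, ho]
        · rw [show i₀ + 1 = i₀ + 1 + 0 by omega, vA2 0 (by omega),
            vW o 1 (by omega) (by omega) (by omega)]
          have : (o - 1) % 2 = 1 := by omega
          simp [this]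
        · rw [show i₁ + 1 = i₁ + 1 + 0 by omega, vW o 1 (by omega) (by omega) (by omega)]
          have h1 : (o - 1) % 2 = 1 := by omega
          have h2 : u (i₁ + 1 + 0) = true := by rw [Nat.add_zero]; exact hS1.2
          rw [h2]
          simp [h1]
      · have ho : o % 2 = 1 := Nat.odd_iff.1 hpar
        refine ⟨hdiffer _ _ (o+1) (by omega) ?_, hdiffer _ _ o (by omega) ?_,
          hdiffer _ _ 0 (by omega) ?_, hdiffer _ _ 0 (by omega) ?_⟩
        · rw [vA1 (o+1) (by omega), vWo1 o (by omega)]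
          simp [Nat.add_mod, ho]
        · rw [vA2 o (by omega), vWo o (by omega)]
          simp [ho]
        · rw [vW o 0 (by omega) (by omega) (by omega), Nat.add_zero, hi₀S.1]
          simp [ho]
        · rw [vW o 0 (by omega) (by omega) (by omega), Nat.add_zero, hS1.1]
          simp [ho]
    -- w-vs-w comparisons
    have wcross : ∀ o o', 1 ≤ o → o < o' → o' ≤ 2*G →
        factorAt u (p - o) (2*G+2) ≠ factorAt u (p - o') (2*G+2) := by
      intro o o' ho1 hoo hoG
      rcases Nat.even_or_odd (o' - o) with hpar | hpar
      · have hp0 : (o' - o) % 2 = 0 := Nat.even_iff.1 hpar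
        have hne : o + 1 < o' := by omega
        refine hdiffer _ _ (o+1) (by omega) ?_
        rw [vWo1 o (by omega), vW o' (o+1) (by omega) (by omega) (by omega)]
        have : (o' - (o+1)) % 2 = 1 := by omega
        simp [this]
      · have hp0 : (o' - o) % 2 = 1 := Nat.odd_iff.1 hpar
        refine hdiffer _ _ o (by omega) ?_
        rw [vWo o (by omega), vW o' o (by omega) (by omega) (by omega)]
        simp [hp0]
    have key : 2*G + 4 ≤ complexity u (2*G+2) := by
      have hlc := le_complexity_of_pairwise u (2*G+2)
        ([i₀+2, i₀+1, i₀, i₁] ++ (List.range (2*G)).map (fun t => p - (t+1))) ?_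
      · simp at hlc; omega
      · rw [List.pairwise_append]
        refine ⟨?_, ?_, ?_⟩
        · refine List.pairwise_cons.2 ⟨?_, List.pairwise_cons.2 ⟨?_,
            List.pairwise_cons.2 ⟨?_, List.pairwise_cons.2 ⟨by simp, List.Pairwise.nil⟩⟩⟩⟩
          · intro q hq
            fin_cases hq
            · refine hdiffer _ _ 0 (by omega) ?_
              rw [vA1 0 (by omega), show i₀ + 1 + 0 = i₀ + 1 + 0 by rfl, vA2 0 (by omega)]
              simp
            · refine hdiffer _ _ 0 (by omega) ?_
              have e2 : u (i₀ + 0) = true := by simpa using hi₀S.1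
              rw [vA1 0 (by omega), e2]
              simp
            · refine hdiffer _ _ 0 (by omega) ?_
              have e2 : u (i₁ + 0) = true := by simpa using hS1.1
              rw [vA1 0 (by omega), e2]
              simp
          · intro q hq
            fin_cases hq
            · refine hdiffer _ _ 2 (by omega) ?_
              rw [vA2 2 (by omega), vX2 2 (by omega) (by omega)]
              simp
            · refine hdiffer _ _ 2 (by omega) ?_
              rw [vA2 2 (by omega), vX1 2 (by omega) (by omega)]
              simp
          · intro q hq
            fin_cases hq
            refine hdiffer _ _ (2*G) (by omega) ?_
            rw [vX2 (2*G) (by omega) (by omega), Fx2G]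
            simp [Nat.mul_mod_right]
        · rw [List.pairwise_map]
          refine List.Pairwise.imp_of_mem ?_ (List.pairwise_lt_range (n := 2*G))
          intro a b hab hbb hlt
          have haG : a < 2*G := List.mem_range.1 hab
          have hbG : b < 2*G := List.mem_range.1 hbb
          exact wcross (a+1) (b+1) (by omega) (by omega) (by omega)
        · intro a haa q hqq
          obtain ⟨t, ht, rfl⟩ := List.mem_map.1 hqq
          have htG : t < 2*G := List.mem_range.1 ht
          have hc := cross (t+1) (by omega) (by omega)
          fin_cases haa
          · exact hc.1
          · exact hc.2.1
          · exact hc.2.2.1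
          · exact hc.2.2.2
    have hfin := hcompl (2*G+2)
    omega

end Gap
section Arith

variable {u : ℕ → Bool}

set_option maxHeartbeats 1000000 in
lemma freq_facts {δ : ℕ} (hδ : 6 ≤ δ) {θ ρa ρb : ℝ}
    (ha : HasFreq u false ρa) (hb : HasFreq u true ρb)
    (hab : ρa < ρb) (hθeq : θ = ρa / ρb) {a : ℕ → ℕ} (hcf : HasCF θ a)
    (ha1 : a 1 = 1) (ha2 : a 2 = δ / 2) :
    ρb - ρa < 1 / (δ : ℝ) ∧ 1/2 < ρb ∧ 1/3 < ρa := by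
  obtain ⟨t, ht0, htp⟩ := hcf
  have hδR : (6 : ℝ) ≤ (δ : ℝ) := by exact_mod_cast hδ
  -- θ ∈ (0,1)
  have hθ0 : 0 < θ := by rw [← ht0]; exact (htp 0).1
  have hθ1 : θ < 1 := by rw [← ht0]; exact (htp 0).2.1
  -- relation at level 0 : 1/θ = 1 + t 1
  have hrel0 : 1 / θ = 1 + t 1 := by
    have := (htp 0).2.2
    rwa [ht0, ha1, Nat.cast_one] at this
  have ht1pos : 0 < t 1 := (htp 1).1
  -- relation at level 1 : t 1 < 1 / (a 2)
  have ha2R : ((δ : ℝ) - 1) / 2 ≤ ((a 2 : ℕ) : ℝ) := by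
    have h1 : δ - 1 ≤ 2 * (δ / 2) := by omega
    have h2 : ((δ - 1 : ℕ) : ℝ) ≤ ((2 * (δ / 2) : ℕ) : ℝ) := by exact_mod_cast h1
    rw [ha2]
    push_cast at h2 ⊢
    have h3 : ((δ : ℝ) - 1) ≤ 2 * ((δ / 2 : ℕ) : ℝ) := by
      calc ((δ : ℝ) - 1) ≤ ((δ : ℕ) : ℝ) - 1 := by norm_num
        _ ≤ 2 * ((δ / 2 : ℕ) : ℝ) := by
            have : (((δ : ℕ) - 1 : ℕ) : ℝ) = (δ : ℝ) - 1 := by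
              have : (1:ℕ) ≤ δ := by omega
              push_cast [this]
              ring
            linarith [h2, this]
    linarith
  have ha2pos : (0 : ℝ) < ((a 2 : ℕ) : ℝ) := by
    have : (3:ℕ) ≤ a 2 := by rw [ha2]; omega
    exact_mod_cast by omega
  have ht1small : t 1 < 1 / ((a 2 : ℕ) : ℝ) := by
    have hrel1 := (htp 1).2.2
    have ht2pos : 0 < t 2 := (htp 2).1
    have : ((a 2 : ℕ) : ℝ) < 1 / t 1 := by rw [hrel1]; linarith
    rw [lt_div_iff₀ ht1pos] at this
    rw [lt_div_iff₀ ha2pos]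
    linarith [mul_comm (t 1) ((a 2 : ℕ) : ℝ)]
  -- θ > (δ-1)/(δ+1)
  have hθlb : ((δ : ℝ) - 1) / ((δ : ℝ) + 1) < θ := by
    have h1 : t 1 < 2 / ((δ : ℝ) - 1) := by
      refine ht1small.trans_le ?_
      rw [div_le_div_iff₀ ha2pos (by linarith)]
      linarith
    have h2 : 1 / θ < 1 + 2 / ((δ : ℝ) - 1) := by rw [hrel0]; linarith
    have hne1 : (δ:ℝ) - 1 ≠ 0 := by linarith
    have h3 : 1 + 2 / ((δ : ℝ) - 1) = ((δ : ℝ) + 1) / ((δ : ℝ) - 1) := by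
      field_simp
      ring
    rw [h3] at h2
    rw [div_lt_iff₀ (by linarith : (0:ℝ) < (δ : ℝ) + 1)]
    rw [div_lt_div_iff₀ hθ0 (by linarith : (0:ℝ) < (δ : ℝ) - 1)] at h2
    nlinarith
  -- basic frequency identities
  have hρa0 : 0 ≤ ρa := freq_nonneg u ha
  have hρb0 : 0 < ρb := lt_of_le_of_lt hρa0 hab
  have hsum : ρa + ρb = 1 := freq_sum_one u ha hb
  have hρaθ : ρa = θ * ρb := by rw [hθeq]; field_simp
  have hρbval : ρb * (1 + θ) = 1 := by nlinarith
  -- conclusions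
  have hθ57 : (5:ℝ)/7 ≤ ((δ : ℝ) - 1) / ((δ : ℝ) + 1) := by
    rw [div_le_div_iff₀ (by norm_num : (0:ℝ) < 7) (by linarith : (0:ℝ) < (δ : ℝ) + 1)]
    linarith
  have hne : (0:ℝ) < 1 + θ := by linarith
  have hρbhalf : 1/2 < ρb := by
    have h1 : (0:ℝ) < ρb * (1 - θ) := mul_pos hρb0 (by linarith)
    nlinarith [hρbval, h1]
  have hθ5 : (5:ℝ)/7 < θ := lt_of_le_of_lt hθ57 hθlb
  refine ⟨?_, hρbhalf, ?_⟩
  · -- ρb - ρa = (1-θ)/(1+θ) < 1/δ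
    have hdiffθ : (ρb - ρa) * (1 + θ) = 1 - θ := by
      linear_combination hρbval - (1 + θ) * hρaθ - θ * hρbval
    have h4 : (δ:ℝ) - 1 < θ * ((δ:ℝ) + 1) := by
      rw [div_lt_iff₀ (by linarith : (0:ℝ) < (δ:ℝ) + 1)] at hθlb
      linarith
    have hkey : (δ : ℝ) * (1 - θ) < 1 + θ := by nlinarith [h4]
    rw [lt_div_iff₀ (by linarith : (0:ℝ) < (δ : ℝ))]
    have h5 : (ρb - ρa) * (δ:ℝ) * (1 + θ) = (δ:ℝ) * ((ρb - ρa) * (1 + θ)) := by ring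
    rw [hdiffθ] at h5
    have h6 : (ρb - ρa) * (δ:ℝ) * (1 + θ) < 1 * (1 + θ) := by rw [h5]; linarith
    exact lt_of_mul_lt_mul_right h6 hne.le
  · have hmul : (0:ℝ) < (θ - 5/7) * (ρb - 1/2) := by
      apply mul_pos <;> linarith
    rw [hρaθ]
    nlinarith [hmul, hθ5, hρbhalf]

end Arith
section Assemble

variable {u : ℕ → Bool}

lemma countBefore_window_mult {c : Bool} {δ : ℕ} (hδ : 0 < δ) {i j : ℕ} (hij : i < j)
    (hci : u i = c)
    (hmod : ((countBefore u c i : ℕ) : ZMod δ) = ((countBefore u c j : ℕ) : ZMod δ)) :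
    countBefore u c i + δ ≤ countBefore u c j := by
  have hstep : countBefore u c (i + 1) = countBefore u c i + 1 := by
    rw [countBefore_succ, if_pos hci]
  have hlt : countBefore u c i < countBefore u c j := by
    have := countBefore_mono u c (show i + 1 ≤ j by omega)
    omega
  have hmodeq : countBefore u c i ≡ countBefore u c j [MOD δ] :=
    (ZMod.natCast_eq_natCast_iff _ _ _).1 hmod
  have hdvd : δ ∣ countBefore u c j - countBefore u c i :=
    (Nat.modEq_iff_dvd' (le_of_lt hlt)).1 hmodeq
  have := Nat.le_of_dvd (by omega) hdvd
  omega

lemma count_false_window (hC0 : ∀ i, u i = false → u (i + 1) = true) :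
    ∀ i t, countBefore u false (i + 2 * t) ≤ countBefore u false i + t := by
  intro i t
  induction t with
  | zero => simp
  | succ t ih =>
    have e1 : i + 2 * (t + 1) = (i + 2 * t + 1) + 1 := by ring
    rw [e1, countBefore_succ, countBefore_succ]
    by_cases hA : u (i + 2 * t) = false
    · have hB := hC0 _ hA
      rw [if_pos hA, if_neg (by simp [hB])]
      omega
    · rw [if_neg hA]
      split <;> omega

lemma trues_le_starts : ∀ (i n : ℕ),
    countBefore u true (i + n) + startCount u i + countBefore u false (i + 1)
      ≤ countBefore u true i + startCount u (i + n) + countBefore u false (i + 1 + n) := by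
  intro i n
  induction n with
  | zero => simp
  | succ n ih =>
    have e1 : i + (n + 1) = (i + n) + 1 := by ring
    have e2 : i + 1 + (n + 1) = (i + n + 1) + 1 := by ring
    have e3 : i + 1 + n = (i + n) + 1 := by ring
    rw [e3] at ih
    have e4 := countBefore_succ u false (i + n + 1)
    have e5 := countBefore_succ u true (i + n)
    rw [e1, e2, e4, e5, startCount_succ]
    cases hA : u (i + n)
    · cases hB : u (i + n + 1)
      · simp only [hA, hB, Bool.false_and]
        norm_num
        omega
      · simp only [hA, hB, Bool.false_and]
        norm_num
        omega
    · cases hB : u (i + n + 1)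
      · simp only [hA, hB, Bool.true_and]
        norm_num
        omega
      · simp only [hA, hB, Bool.true_and]
        norm_num
        omega

lemma startCount_const {a b : ℕ} (hab : a ≤ b)
    (h : ∀ k, a ≤ k → k < b → ¬ (u k = true ∧ u (k + 1) = true)) :
    startCount u b = startCount u a := by
  induction b, hab using Nat.le_induction with
  | base => rfl
  | succ b hab ih =>
    rw [startCount_succ, if_neg (by
      intro hcc
      rw [Bool.and_eq_true] at hcc
      exact h b hab (by omega) ⟨hcc.1, hcc.2⟩)]
    rw [ih (fun k hk1 hk2 => h k hk1 (by omega))]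
    omega

lemma colourCyc_inl {δ : ℕ} {n : ℕ} {m : ZMod δ} (h : colourCyc δ u n = Sum.inl m) :
    u n = false ∧ ((countBefore u false n : ℕ) : ZMod δ) = m := by
  unfold colourCyc colour cyc at h
  by_cases hn : u n = false
  · rw [if_pos hn] at h
    exact ⟨hn, Sum.inl.inj h⟩
  · rw [if_neg hn] at h
    exact absurd h (by simp)

lemma colourCyc_inr {δ : ℕ} {n : ℕ} {m : ZMod δ} (h : colourCyc δ u n = Sum.inr m) :
    u n = true ∧ ((countBefore u true n : ℕ) : ZMod δ) = m := by
  unfold colourCyc colour cyc at h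
  by_cases hn : u n = false
  · rw [if_pos hn] at h
    exact absurd h (by simp)
  · rw [if_neg hn] at h
    exact ⟨by cases hv : u n; exact absurd hv hn; rfl, Sum.inr.inj h⟩

lemma consec_starts_odd (hC0 : ∀ i, u i = false → u (i + 1) = true) {p q : ℕ}
    (hpS : u p = true ∧ u (p + 1) = true) (hqS : u q = true)
    (hlt : p + 1 < q) (hmid : ∀ k, p < k → k < q → ¬ (u k = true ∧ u (k + 1) = true)) :
    (q - p) % 2 = 1 := by
  have halt := alt_lemma (b := q) hC0 hpS.2 (fun r hr1 hr2 => hmid r (by omega) hr2)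
  have := (halt (q - p - 1) (by omega)).1 (by
    rw [show p + 1 + (q - p - 1) = q by omega]
    exact hqS)
  omega

end Assemble
theorem statement9 (δ : ℕ) (hδ : 6 ≤ δ) (u : ℕ → Bool) (hu : IsStandard u)
    (θ : ℝ) (hθ : HasSlope u θ) (a : ℕ → ℕ) (hcf : HasCF θ a)
    (ha1 : a 1 = 1) (ha2 : a 2 = δ / 2) :
    ∀ (c : ZMod δ ⊕ ZMod δ) (i j : ℕ),
      ConsecOcc (colourCyc δ u) c i j → 2 * δ - 2 ≤ j - i := by
  classical
  obtain ⟨⟨hap, hcompl⟩, -, -⟩ := hu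
  obtain ⟨ρa, ρb, ha, hb, hab, hθeq⟩ := hθ
  obtain ⟨hdiff, hρbhalf, hρathird⟩ := freq_facts hδ ha hb hab hθeq hcf ha1 ha2
  have hC0 : ∀ i, u i = false → u (i + 1) = true := noFF hap (hcompl 2) hb hρbhalf
  have hδ0 : 0 < δ := by omega
  intro c i j hocc
  obtain ⟨hij, hci, hcj, hbet⟩ := hocc
  by_contra hlt
  push_neg at hlt
  match c with
  | Sum.inl m =>
    obtain ⟨hui, hmi⟩ := colourCyc_inl hci
    obtain ⟨huj, hmj⟩ := colourCyc_inl hcj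
    have hN0 := countBefore_window_mult hδ0 hij hui (hmi.trans hmj.symm)
    have hsp := count_false_window hC0 i ((j - i + 1) / 2)
    have hmono := countBefore_mono u false (show j ≤ i + 2 * ((j - i + 1) / 2) by omega)
    omega
  | Sum.inr m =>
    obtain ⟨hui, hmi⟩ := colourCyc_inr hci
    obtain ⟨huj, hmj⟩ := colourCyc_inr hcj
    have hN1 := countBefore_window_mult hδ0 hij hui (hmi.trans hmj.symm)
    have hsi := countBefore_add_compl u i
    have hsj := countBefore_add_compl u j
    have htr := trues_le_starts (u := u) i (j - i)
    rw [show i + (j - i) = j by omega, show i + 1 + (j - i) = j + 1 by omega] at htr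
    have hc0i : countBefore u false (i + 1) = countBefore u false i := by
      rw [countBefore_succ, if_neg (by simp [hui])]
      omega
    have hc0j : countBefore u false (j + 1) = countBefore u false j := by
      rw [countBefore_succ, if_neg (by simp [huj])]
      omega
    rw [hc0i, hc0j] at htr
    have hSC3 : startCount u i + 3 ≤ startCount u j := by omega
    have hn111 := no111 hap (hcompl 3) hC0 ha hρathird
    -- first start at or after i
    have hex1 : ∃ x, i ≤ x ∧ u x = true ∧ u (x + 1) = true := by
      obtain ⟨x, h1, h2, h3⟩ := starts_unbounded hap hC0 i
      exact ⟨x, h1, h2, h3⟩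
    obtain ⟨hs1i, hs1S, hs1S'⟩ := Nat.find_spec hex1
    set s1 := Nat.find hex1 with hs1def
    have hs1min : ∀ k, i ≤ k → k < s1 → ¬ (u k = true ∧ u (k + 1) = true) := by
      intro k hk1 hk2 hS
      exact Nat.find_min hex1 hk2 ⟨hk1, hS.1, hS.2⟩
    have hSCs1 : startCount u s1 = startCount u i := startCount_const hs1i hs1min
    have hSCs1' : startCount u (s1 + 1) = startCount u s1 + 1 := by
      rw [startCount_succ, if_pos (by simp [hs1S, hs1S'])]
    have hs1j : s1 < j := by
      by_contra hge
      push_neg at hge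
      have hcst : startCount u j = startCount u i :=
        startCount_const (by omega) (fun k hk1 hk2 => hs1min k hk1 (by omega))
      omega
    -- second start
    have hex2 : ∃ x, s1 + 1 ≤ x ∧ u x = true ∧ u (x + 1) = true := by
      obtain ⟨x, h1, h2, h3⟩ := starts_unbounded hap hC0 (s1 + 1)
      exact ⟨x, h1, h2, h3⟩
    obtain ⟨hs2i, hs2S, hs2S'⟩ := Nat.find_spec hex2
    set s2 := Nat.find hex2 with hs2def
    have hs2min : ∀ k, s1 < k → k < s2 → ¬ (u k = true ∧ u (k + 1) = true) := by
      intro k hk1 hk2 hS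
      exact Nat.find_min hex2 hk2 ⟨by omega, hS.1, hS.2⟩
    have hSCs2 : startCount u s2 = startCount u (s1 + 1) :=
      startCount_const hs2i (fun k hk1 hk2 => hs2min k (by omega) hk2)
    have hSCs2' : startCount u (s2 + 1) = startCount u s2 + 1 := by
      rw [startCount_succ, if_pos (by simp [hs2S, hs2S'])]
    have hs2j : s2 < j := by
      by_contra hge
      push_neg at hge
      have hcst : startCount u j = startCount u (s1 + 1) :=
        startCount_const (by omega) (fun k hk1 hk2 => hs2min k (by omega) (by omega))
      omega
    -- third start
    have hex3 : ∃ x, s2 + 1 ≤ x ∧ u x = true ∧ u (x + 1) = true := by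
      obtain ⟨x, h1, h2, h3⟩ := starts_unbounded hap hC0 (s2 + 1)
      exact ⟨x, h1, h2, h3⟩
    obtain ⟨hs3i, hs3S, hs3S'⟩ := Nat.find_spec hex3
    set s3 := Nat.find hex3 with hs3def
    have hs3min : ∀ k, s2 < k → k < s3 → ¬ (u k = true ∧ u (k + 1) = true) := by
      intro k hk1 hk2 hS
      exact Nat.find_min hex3 hk2 ⟨by omega, hS.1, hS.2⟩
    have hs3j : s3 < j := by
      by_contra hge
      push_neg at hge
      have hSCs3 : startCount u s3 = startCount u (s2 + 1) :=
        startCount_const hs3i (fun k hk1 hk2 => hs3min k (by omega) hk2)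
      have hcst : startCount u j = startCount u (s2 + 1) :=
        startCount_const (by omega) (fun k hk1 hk2 => hs3min k (by omega) (by omega))
      omega
    -- distances are odd and at least 3
    have hd1ge : s1 + 2 ≤ s2 := by
      rcases Nat.lt_or_ge (s1 + 1) s2 with h | h
      · omega
      · exfalso
        have h21 : s2 = s1 + 1 := by omega
        refine hn111 s1 ⟨hs1S, hs1S', ?_⟩
        have h22 := hs2S'
        rw [h21] at h22
        simpa [show s1 + 1 + 1 = s1 + 2 by omega] using h22
    have hd2ge : s2 + 2 ≤ s3 := by
      rcases Nat.lt_or_ge (s2 + 1) s3 with h | h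
      · omega
      · exfalso
        have h21 : s3 = s2 + 1 := by omega
        refine hn111 s2 ⟨hs2S, hs2S', ?_⟩
        have h22 := hs3S'
        rw [h21] at h22
        simpa [show s2 + 1 + 1 = s2 + 2 by omega] using h22
    have hd1odd : (s2 - s1) % 2 = 1 :=
      consec_starts_odd hC0 ⟨hs1S, hs1S'⟩ hs2S (by omega) hs2min
    have hd2odd : (s3 - s2) % 2 = 1 :=
      consec_starts_odd hC0 ⟨hs2S, hs2S'⟩ hs3S (by omega) hs3min
    -- apply the gap lemma to the smaller distance
    rcases le_or_gt (s2 - s1) (s3 - s2) with hmin | hmin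
    · set G := (s2 - s1 + 1) / 2 with hGdef
      have hGd : s1 + (2 * G - 1) = s2 := by omega
      refine no_close_starts hap hcompl hC0 ha hb hδ hdiff hρathird G (by omega) (by omega)
        s1 ⟨⟨hs1S, hs1S'⟩, ?_, ?_⟩
      · rw [hGd]
        exact ⟨hs2S, hs2S'⟩
      · intro k hk1 hk2
        rw [hGd] at hk2
        exact hs2min k hk1 hk2
    · set G := (s3 - s2 + 1) / 2 with hGdef
      have hGd : s2 + (2 * G - 1) = s3 := by omega
      refine no_close_starts hap hcompl hC0 ha hb hδ hdiff hρathird G (by omega) (by omega)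
        s2 ⟨⟨hs2S, hs2S'⟩, ?_, ?_⟩
      · rw [hGd]
        exact ⟨hs3S, hs3S'⟩
      · intro k hk1 hk2
        rw [hGd] at hk2
        exact hs3min k hk1 hk2

end BalancedCE
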